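/- Let N and W be natural numbers with 1 ≤ W < N, and let f be a random leading edge drawn from the distribution HD_{N,W}. Then for every index i with W ≤ i ≤ N − W − 1, the probability that i belongs to the window [f, f+W−1] (i.e. that f ≤ i ≤ f + W − 1) equals W/N. Consequently, if the encoded vector g is formed by drawing f from HD_{N,W} and then setting each coordinate inside [f, f+W−1] to 1 independently with probability 1/2 and all coordinates outside the window to 0, then for every such interior index i the probability that g i = 1 equals W/(2N). -/

import Mathlib

/-- The leading-edge distribution `HD_{N,W}` of Band Codes: probability `(W+1)/(2N)` for
`f ∈ {0, N−W}` and `1/N` for `0 < f < N−W`. -/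
def HD (N W f : ℕ) : ℚ :=
  if f = 0 ∨ f = N - W then (W + 1 : ℚ) / (2 * N) else 1 / N

/-- for an interior index `W ≤ i ≤ N − W − 1`, the probability (under a
leading edge `f` drawn from `HD_{N,W}`) that `i` lies in the window `[f, f+W−1]` equals
`W/N`; consequently, if each coordinate inside the window is then set to `1`
independently with probability `1/2` (and to `0` outside), the probability that the
`i`-th coordinate of the encoded vector equals `1` is `W/(2N)`. -/
theorem stmt_10 (N W : ℕ) (hW1 : 1 ≤ W) (hWN : W < N)
    (i : ℕ) (hi1 : W ≤ i) (hi2 : i ≤ N - W - 1) :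
    (∑ f ∈ (Finset.range (N - W + 1)).filter (fun f => f ≤ i ∧ i ≤ f + W - 1), HD N W f)
      = (W : ℚ) / N ∧
    (∑ f ∈ (Finset.range (N - W + 1)).filter (fun f => f ≤ i ∧ i ≤ f + W - 1),
        HD N W f * (1 / 2 : ℚ))
      = (W : ℚ) / (2 * N) := by
  have hset : (Finset.range (N - W + 1)).filter (fun f => f ≤ i ∧ i ≤ f + W - 1)
      = Finset.Icc (i - W + 1) i := by
    ext f
    simp only [Finset.mem_filter, Finset.mem_range, Finset.mem_Icc]
    omega
  have hN : (N : ℚ) ≠ 0 := Nat.cast_ne_zero.mpr (by omega)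
  have hsum : (∑ f ∈ (Finset.range (N - W + 1)).filter
      (fun f => f ≤ i ∧ i ≤ f + W - 1), HD N W f) = (W : ℚ) / N := by
    rw [hset]
    have : ∀ f ∈ Finset.Icc (i - W + 1) i, HD N W f = 1 / N := by
      intro f hf
      simp only [Finset.mem_Icc] at hf
      unfold HD
      rw [if_neg]
      omega
    rw [Finset.sum_congr rfl this, Finset.sum_const, Nat.card_Icc]
    have hcard : i + 1 - (i - W + 1) = W := by omega
    rw [hcard]
    rw [nsmul_eq_mul, mul_one_div]
  refine ⟨hsum, ?_⟩
  rw [← Finset.sum_mul, hsum, div_mul_div_comm, mul_one, mul_comm (N:ℚ) 2]
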